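/- Let Ŵ : ℝ × ℝ → ℝ be lower semicontinuous and coercive with all sublevel sets symmetric and diagonal. Then for every c ∈ ℝ, the sublevel set of the separately level convex envelope satisfies L_c(Ŵ^slc) = (L_c(Ŵ))^sc, where Ŵ^slc is the largest separately level convex function below Ŵ and (·)^sc denotes the separately convex hull. -/
import Mathlib


open Set

/-- Separate convexity (with vectorial components) of a subset of a product space. -/
def SepConvex {α : Type*} [AddCommGroup α] [Module ℝ α] (E : Set (α × α)) : Prop :=
  ∀ p ∈ E, ∀ q ∈ E, ∀ t : ℝ, t ∈ Set.Icc (0:ℝ) 1 → (p.1 = q.1 ∨ p.2 = q.2) →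
    t • p + (1 - t) • q ∈ E

/-- The separately convex hull: smallest separately convex superset. -/
def sepConvexHull {α : Type*} [AddCommGroup α] [Module ℝ α] (E : Set (α × α)) : Set (α × α) :=
  ⋂₀ {F : Set (α × α) | E ⊆ F ∧ SepConvex F}

/-- Diagonalized and symmetrized version Ê of a set E. -/
def hatSet {α : Type*} (E : Set (α × α)) : Set (α × α) :=
  {p ∈ E | (p.1, p.1) ∈ E ∧ (p.2, p.1) ∈ E ∧ (p.2, p.2) ∈ E}

/-- `P` is a maximal Cartesian subset of `E`. -/
def IsMaxCart {α : Type*} (E P : Set (α × α)) : Prop :=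
  ∃ A : Set α, P = A ×ˢ A ∧ P ⊆ E ∧ ∀ B : Set α, A ⊆ B → B ×ˢ B ⊆ E → B = A

open Filter

/-- A real-valued function is separately level convex if all its sublevel sets are
separately convex. -/
def SepLevelConvex (V : ℝ × ℝ → ℝ) : Prop :=
  ∀ c : ℝ, SepConvex {p | V p ≤ c}

section AuxSLC
open Topology

section Basic

variable {E F : Set (ℝ × ℝ)}

lemma subset_sepConvexHull : E ⊆ sepConvexHull E := fun _ hp =>
  mem_sInter.2 fun _ hF => hF.1 hp

lemma sepConvexHull_min (h1 : E ⊆ F) (h2 : SepConvex F) : sepConvexHull E ⊆ F :=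
  sInter_subset_of_mem ⟨h1, h2⟩

lemma sepConvex_sepConvexHull : SepConvex (sepConvexHull E) := by
  intro p hp q hq t ht hc
  exact mem_sInter.2 fun F hF =>
    hF.2 p (mem_sInter.1 hp F hF) q (mem_sInter.1 hq F hF) t ht hc

lemma sepConvexHull_mono (h : E ⊆ F) : sepConvexHull E ⊆ sepConvexHull F :=
  sepConvexHull_min (h.trans subset_sepConvexHull) sepConvex_sepConvexHull

/-- all 16 pairs from `{a,b,c,d}` belong to `E`. -/
def Quad (E : Set (ℝ × ℝ)) (a b c d : ℝ) : Prop :=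
  ∀ x ∈ ({a, b, c, d} : Set ℝ), ∀ y ∈ ({a, b, c, d} : Set ℝ), (x, y) ∈ E

def Hset (E : Set (ℝ × ℝ)) : Set (ℝ × ℝ) :=
  {p | ∃ a b c d : ℝ, Quad E a b c d ∧
    p.1 ∈ Icc (min (min a b) (min c d)) (max (max a b) (max c d)) ∧
    p.2 ∈ Icc (min (min a b) (min c d)) (max (max a b) (max c d))}

lemma min4_mem (a b c d : ℝ) : min (min a b) (min c d) ∈ ({a, b, c, d} : Set ℝ) := by
  rcases min_cases (min a b) (min c d) with ⟨h, _⟩ | ⟨h, _⟩ <;> rw [h]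
  · rcases min_cases a b with ⟨h2, _⟩ | ⟨h2, _⟩ <;> rw [h2] <;> simp
  · rcases min_cases c d with ⟨h2, _⟩ | ⟨h2, _⟩ <;> rw [h2] <;> simp

lemma max4_mem (a b c d : ℝ) : max (max a b) (max c d) ∈ ({a, b, c, d} : Set ℝ) := by
  rcases max_cases (max a b) (max c d) with ⟨h, _⟩ | ⟨h, _⟩ <;> rw [h]
  · rcases max_cases a b with ⟨h2, _⟩ | ⟨h2, _⟩ <;> rw [h2] <;> simp
  · rcases max_cases c d with ⟨h2, _⟩ | ⟨h2, _⟩ <;> rw [h2] <;> simp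

lemma quad_mem_hull {a b c d : ℝ} (hq : Quad E a b c d) {p : ℝ × ℝ}
    (h1 : p.1 ∈ Icc (min (min a b) (min c d)) (max (max a b) (max c d)))
    (h2 : p.2 ∈ Icc (min (min a b) (min c d)) (max (max a b) (max c d))) :
    p ∈ sepConvexHull E := by
  set m := min (min a b) (min c d) with hm
  set M := max (max a b) (max c d) with hM
  have hmem_m : m ∈ ({a, b, c, d} : Set ℝ) := min4_mem a b c d
  have hmem_M : M ∈ ({a, b, c, d} : Set ℝ) := max4_mem a b c d
  have hmM : m ≤ M :=
    le_trans ((min_le_left _ _).trans (min_le_left a b))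
      ((le_max_left a b).trans (le_max_left _ _))
  have hseg : ∀ y ∈ Icc m M, ∃ u v : ℝ, 0 ≤ u ∧ 0 ≤ v ∧ u + v = 1 ∧ u * m + v * M = y := by
    intro y hy
    rw [← segment_eq_Icc hmM] at hy
    obtain ⟨u, v, hu, hv, huv, h⟩ := hy
    exact ⟨u, v, hu, hv, huv, by simpa [smul_eq_mul] using h⟩
  have hEm : ∀ x ∈ ({a, b, c, d} : Set ℝ), ∀ z ∈ Icc m M,
      ((x : ℝ), z) ∈ sepConvexHull E := by
    intro x hx z hz
    obtain ⟨u, v, hu, hv, huv, hy⟩ := hseg z hz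
    have hA : ((x : ℝ), m) ∈ sepConvexHull E := subset_sepConvexHull (hq x hx m hmem_m)
    have hB : ((x : ℝ), M) ∈ sepConvexHull E := subset_sepConvexHull (hq x hx M hmem_M)
    have hcc := sepConvex_sepConvexHull ((x : ℝ), m) hA ((x : ℝ), M) hB u
      ⟨hu, by linarith⟩ (Or.inl rfl)
    have heq : u • ((x : ℝ), m) + (1 - u) • ((x : ℝ), M) = ((x : ℝ), z) := by
      have hv' : (1 : ℝ) - u = v := by linarith
      rw [hv']
      rw [Prod.ext_iff]
      simp only [Prod.fst_add, Prod.snd_add, Prod.smul_fst, Prod.smul_snd, smul_eq_mul]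
      exact ⟨by linear_combination x * huv, hy⟩
    rwa [heq] at hcc
  obtain ⟨u, v, hu, hv, huv, hx⟩ := hseg p.1 h1
  have hA : ((m : ℝ), p.2) ∈ sepConvexHull E := hEm m hmem_m p.2 h2
  have hB : ((M : ℝ), p.2) ∈ sepConvexHull E := hEm M hmem_M p.2 h2
  have hcc := sepConvex_sepConvexHull ((m : ℝ), p.2) hA ((M : ℝ), p.2) hB u
    ⟨hu, by linarith⟩ (Or.inr rfl)
  have heq : u • ((m : ℝ), p.2) + (1 - u) • ((M : ℝ), p.2) = p := by
    have hv' : (1 : ℝ) - u = v := by linarith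
    rw [hv']
    rw [Prod.ext_iff]
    simp only [Prod.fst_add, Prod.snd_add, Prod.smul_fst, Prod.smul_snd, smul_eq_mul]
    exact ⟨hx, by linear_combination p.2 * huv⟩
  rwa [heq] at hcc

lemma subset_Hset (hs : ∀ p ∈ E, ((p.2 : ℝ), p.1) ∈ E)
    (hd : ∀ p ∈ E, ((p.1 : ℝ), p.1) ∈ E ∧ ((p.2 : ℝ), p.2) ∈ E) : E ⊆ Hset E := by
  intro p hp
  refine ⟨p.1, p.1, p.2, p.2, ?_, ?_, ?_⟩
  · intro x hx y hy
    simp only [Set.mem_insert_iff, Set.mem_singleton_iff] at hx hy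
    have hx' : x = p.1 ∨ x = p.2 := by tauto
    have hy' : y = p.1 ∨ y = p.2 := by tauto
    rcases hx' with rfl | rfl <;> rcases hy' with rfl | rfl
    · exact (hd p hp).1
    · simpa using hp
    · exact hs p hp
    · exact (hd p hp).2
  · simp only [min_self, max_self]
    exact ⟨min_le_left _ _, le_max_left _ _⟩
  · simp only [min_self, max_self]
    exact ⟨min_le_right _ _, le_max_right _ _⟩

lemma hset_aux {a b c d a' b' c' d' : ℝ} (hq : Quad E a b c d) (hq' : Quad E a' b' c' d')
    {x p2 q2 t : ℝ}
    (hx1 : x ∈ Icc (min (min a b) (min c d)) (max (max a b) (max c d)))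
    (hp2 : p2 ∈ Icc (min (min a b) (min c d)) (max (max a b) (max c d)))
    (hx2 : x ∈ Icc (min (min a' b') (min c' d')) (max (max a' b') (max c' d')))
    (hq2 : q2 ∈ Icc (min (min a' b') (min c' d')) (max (max a' b') (max c' d')))
    (ht : t ∈ Icc (0:ℝ) 1) :
    ((x : ℝ), t * p2 + (1 - t) * q2) ∈ Hset E ∧
      ((t * p2 + (1 - t) * q2 : ℝ), x) ∈ Hset E := by
  set y := t * p2 + (1 - t) * q2 with hy
  have hprod : (y - p2) * (y - q2) ≤ 0 := by
    have h1 : (y - p2) * (y - q2) = -(t * (1 - t) * (p2 - q2)^2) := by rw [hy]; ring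
    rw [h1]
    have h3 : (0:ℝ) ≤ 1 - t := by linarith [ht.2]
    have h4 : (0:ℝ) ≤ t * (1 - t) * (p2 - q2)^2 :=
      mul_nonneg (mul_nonneg ht.1 h3) (sq_nonneg _)
    linarith
  have hcase : y ∈ Icc (min (min a b) (min c d)) (max (max a b) (max c d)) ∨
      y ∈ Icc (min (min a' b') (min c' d')) (max (max a' b') (max c' d')) := by
    rcases lt_or_ge y (min (min a b) (min c d)) with h1 | h1
    · right
      have hyp2 : y - p2 < 0 := by linarith [hp2.1]
      have hyq2 : q2 ≤ y := by nlinarith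
      exact ⟨le_trans hq2.1 hyq2, le_trans (le_of_lt (lt_of_lt_of_le h1 hx1.1)) hx2.2⟩
    · rcases le_or_gt y (max (max a b) (max c d)) with h2 | h2
      · exact Or.inl ⟨h1, h2⟩
      · right
        have hyp2 : 0 < y - p2 := by linarith [hp2.2]
        have hyq2 : y ≤ q2 := by nlinarith
        exact ⟨le_trans hx2.1 (le_of_lt (lt_of_le_of_lt hx1.2 h2)), le_trans hyq2 hq2.2⟩
  rcases hcase with h | h
  · exact ⟨⟨a, b, c, d, hq, hx1, h⟩, ⟨a, b, c, d, hq, h, hx1⟩⟩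
  · exact ⟨⟨a', b', c', d', hq', hx2, h⟩, ⟨a', b', c', d', hq', h, hx2⟩⟩

lemma sepConvex_Hset : SepConvex (Hset E) := by
  rintro p ⟨a, b, c, d, hq, hp1, hp2⟩ q ⟨a', b', c', d', hq', hq1, hq2⟩ t ht hcase
  rcases hcase with h | h
  · have heq : t • p + (1 - t) • q = ((p.1 : ℝ), t * p.2 + (1 - t) * q.2) := by
      rw [Prod.ext_iff]
      simp only [Prod.fst_add, Prod.snd_add, Prod.smul_fst, Prod.smul_snd, smul_eq_mul]
      refine ⟨?_, trivial⟩
      rw [← h]; ring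
    rw [heq]
    have hx2 : p.1 ∈ Icc (min (min a' b') (min c' d')) (max (max a' b') (max c' d')) := by
      rw [h]; exact hq1
    exact (hset_aux hq hq' hp1 hp2 hx2 hq2 ht).1
  · have heq : t • p + (1 - t) • q = ((t * p.1 + (1 - t) * q.1 : ℝ), p.2) := by
      rw [Prod.ext_iff]
      simp only [Prod.fst_add, Prod.snd_add, Prod.smul_fst, Prod.smul_snd, smul_eq_mul]
      refine ⟨trivial, ?_⟩
      rw [← h]; ring
    rw [heq]
    have hx2 : p.2 ∈ Icc (min (min a' b') (min c' d')) (max (max a' b') (max c' d')) := by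
      rw [h]; exact hq2
    exact (hset_aux hq hq' hp2 hp1 hx2 hq1 ht).2

end Basic

open Filter Topology

section Key

variable {W : ℝ × ℝ → ℝ}

lemma sublevel_isClosed (hlsc : LowerSemicontinuous W) (d : ℝ) :
    IsClosed {q : ℝ × ℝ | W q ≤ d} := hlsc.isClosed_preimage d

lemma sublevel_isCompact (hlsc : LowerSemicontinuous W)
    (hcoer : Tendsto W (cocompact _) atTop) (d : ℝ) :
    IsCompact {q : ℝ × ℝ | W q ≤ d} := by
  have h : ∀ᶠ q in cocompact (ℝ × ℝ), d + 1 ≤ W q :=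
    hcoer.eventually (eventually_ge_atTop (d + 1))
  rw [Filter.eventually_iff, mem_cocompact] at h
  obtain ⟨t, htc, hts⟩ := h
  refine htc.of_isClosed_subset (sublevel_isClosed hlsc d) ?_
  intro q hq
  by_contra hq'
  have h2 := hts hq'
  simp only [Set.mem_setOf_eq] at h2 hq
  linarith

lemma W_bddBelow (hlsc : LowerSemicontinuous W)
    (hcoer : Tendsto W (cocompact _) atTop) : ∃ m : ℝ, ∀ q : ℝ × ℝ, m ≤ W q := by
  by_contra h
  push_neg at h
  set t : ℕ → Set (ℝ × ℝ) := fun n => {q | W q ≤ -(n : ℝ)} with ht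
  have hne : (⋂ n, t n).Nonempty := by
    refine IsCompact.nonempty_iInter_of_sequence_nonempty_isCompact_isClosed t
      (fun n => ?_) (fun n => ?_) ?_ (fun n => sublevel_isClosed hlsc _)
    · intro q hq
      simp only [ht, Set.mem_setOf_eq] at hq ⊢
      have : -((n : ℝ) + 1) ≤ -(n : ℝ) := by linarith
      calc W q ≤ -(((n : ℕ) + 1 : ℕ) : ℝ) := hq
        _ ≤ -(n : ℝ) := by push_cast; linarith
    · obtain ⟨q, hq⟩ := h (-(n : ℝ))
      exact ⟨q, le_of_lt hq⟩
    · exact sublevel_isCompact hlsc hcoer _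
  obtain ⟨q, hq⟩ := hne
  simp only [Set.mem_iInter, ht, Set.mem_setOf_eq] at hq
  obtain ⟨n, hn⟩ := exists_nat_gt (-(W q))
  have := hq n
  linarith

lemma key (hlsc : LowerSemicontinuous W)
    (hcoer : Tendsto W (cocompact _) atTop)
    (hsym : ∀ c : ℝ, ∀ p ∈ {p : ℝ × ℝ | W p ≤ c}, (p.2, p.1) ∈ {p : ℝ × ℝ | W p ≤ c})
    (hdiag : ∀ c : ℝ, ∀ p ∈ {p : ℝ × ℝ | W p ≤ c},
      (p.1, p.1) ∈ {p : ℝ × ℝ | W p ≤ c} ∧ (p.2, p.2) ∈ {p : ℝ × ℝ | W p ≤ c})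
    (c : ℝ) (p : ℝ × ℝ)
    (hp : ∀ n : ℕ, p ∈ sepConvexHull {q : ℝ × ℝ | W q ≤ c + 1 / (n + 1)}) :
    p ∈ sepConvexHull {q : ℝ × ℝ | W q ≤ c} := by
  have hsub : ∀ n : ℕ, p ∈ Hset {q : ℝ × ℝ | W q ≤ c + 1 / (n + 1)} := by
    intro n
    exact sepConvexHull_min (subset_Hset (hsym _) (fun r hr => hdiag _ r hr))
      sepConvex_Hset (hp n)
  simp only [Hset, Set.mem_setOf_eq] at hsub
  choose a b cc dd hq hp1 hp2 using hsub
  set K := {q : ℝ × ℝ | W q ≤ c + 1} with hK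
  have hKc : IsCompact (K ×ˢ K) :=
    (sublevel_isCompact hlsc hcoer _).prod (sublevel_isCompact hlsc hcoer _)
  have hle1 : ∀ n : ℕ, {q : ℝ × ℝ | W q ≤ c + 1 / (n + 1)} ⊆ K := by
    intro n q hq'
    simp only [hK, Set.mem_setOf_eq] at hq' ⊢
    have h1 : (1 : ℝ) / (n + 1) ≤ 1 := by
      rw [div_le_one (by positivity)]
      have : (0:ℝ) ≤ (n:ℝ) := Nat.cast_nonneg n
      linarith
    linarith
  set g : ℕ → (ℝ × ℝ) × (ℝ × ℝ) := fun n => ((a n, b n), (cc n, dd n)) with hg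
  have hgmem : ∀ n, g n ∈ K ×ˢ K := by
    intro n
    constructor
    · exact hle1 n (hq n (a n) (by simp) (b n) (by simp))
    · exact hle1 n (hq n (cc n) (by simp) (dd n) (by simp))
  obtain ⟨x0, _, φ, hφ, hlim⟩ := hKc.tendsto_subseq hgmem
  set A := x0.1.1; set B := x0.1.2; set C := x0.2.1; set D := x0.2.2
  have hA : Tendsto (fun n => a (φ n)) atTop (𝓝 A) :=
    ((continuous_fst.comp continuous_fst).tendsto x0).comp hlim
  have hB : Tendsto (fun n => b (φ n)) atTop (𝓝 B) :=
    ((continuous_snd.comp continuous_fst).tendsto x0).comp hlim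
  have hC : Tendsto (fun n => cc (φ n)) atTop (𝓝 C) :=
    ((continuous_fst.comp continuous_snd).tendsto x0).comp hlim
  have hD : Tendsto (fun n => dd (φ n)) atTop (𝓝 D) :=
    ((continuous_snd.comp continuous_snd).tendsto x0).comp hlim
  -- limit of pairs lies in the level set at level c
  have hpair : ∀ (u v : ℕ → ℝ) (U V : ℝ), Tendsto (fun n => u (φ n)) atTop (𝓝 U) →
      Tendsto (fun n => v (φ n)) atTop (𝓝 V) →
      (∀ n, W (u n, v n) ≤ c + 1 / (n + 1)) → W (U, V) ≤ c := by
    intro u v U V hu hv hWn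
    have hloc : ∀ m : ℕ, W (U, V) ≤ c + 1 / (m + 1) := by
      intro m
      have hmem : ∀ n, n ≥ m → (u (φ n), v (φ n)) ∈ {q : ℝ × ℝ | W q ≤ c + 1 / (m + 1)} := by
        intro n hn
        have h0 : (m : ℝ) + 1 ≤ (φ n : ℝ) + 1 := by
          have h1 : m ≤ φ n := le_trans hn (hφ.le_apply)
          have h2 : (m : ℝ) ≤ (φ n : ℝ) := Nat.cast_le.mpr h1
          linarith
        have h2 : 1 / ((φ n : ℝ) + 1) ≤ 1 / ((m : ℝ) + 1) :=
          one_div_le_one_div_of_le (by positivity) h0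
        simp only [Set.mem_setOf_eq]
        exact le_trans (hWn (φ n)) (by linarith)
      exact (sublevel_isClosed hlsc (c + 1 / (m + 1))).mem_of_tendsto
        (hu.prodMk_nhds hv) (eventually_atTop.2 ⟨m, hmem⟩)
    refine le_of_forall_pos_le_add ?_
    intro ε hε
    obtain ⟨m, hm⟩ := exists_nat_one_div_lt hε
    exact le_trans (hloc m) (by linarith [hm])
  have hlimset : ∀ x ∈ ({A, B, C, D} : Set ℝ), ∃ u : ℕ → ℝ,
      Tendsto (fun n => u (φ n)) atTop (𝓝 x) ∧
      ∀ n, u n ∈ ({a n, b n, cc n, dd n} : Set ℝ) := by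
    intro x hx
    simp only [Set.mem_insert_iff, Set.mem_singleton_iff] at hx
    rcases hx with rfl | rfl | rfl | rfl
    · exact ⟨a, hA, fun n => by simp⟩
    · exact ⟨b, hB, fun n => by simp⟩
    · exact ⟨cc, hC, fun n => by simp⟩
    · exact ⟨dd, hD, fun n => by simp⟩
  have hquad : Quad {q : ℝ × ℝ | W q ≤ c} A B C D := by
    intro x hx y hy
    obtain ⟨u, hu1, hu2⟩ := hlimset x hx
    obtain ⟨v, hv1, hv2⟩ := hlimset y hy
    exact hpair u v x y hu1 hv1 (fun n => hq n (u n) (hu2 n) (v n) (hv2 n))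
  have hminT : Tendsto (fun n => min (min (a (φ n)) (b (φ n))) (min (cc (φ n)) (dd (φ n))))
      atTop (𝓝 (min (min A B) (min C D))) := (hA.min hB).min (hC.min hD)
  have hmaxT : Tendsto (fun n => max (max (a (φ n)) (b (φ n))) (max (cc (φ n)) (dd (φ n))))
      atTop (𝓝 (max (max A B) (max C D))) := (hA.max hB).max (hC.max hD)
  have hpm1 : p.1 ∈ Icc (min (min A B) (min C D)) (max (max A B) (max C D)) := by
    constructor
    · exact le_of_tendsto hminT (Eventually.of_forall fun n => (hp1 (φ n)).1)
    · exact ge_of_tendsto hmaxT (Eventually.of_forall fun n => (hp1 (φ n)).2)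
  have hpm2 : p.2 ∈ Icc (min (min A B) (min C D)) (max (max A B) (max C D)) := by
    constructor
    · exact le_of_tendsto hminT (Eventually.of_forall fun n => (hp2 (φ n)).1)
    · exact ge_of_tendsto hmaxT (Eventually.of_forall fun n => (hp2 (φ n)).2)
  exact quad_mem_hull hquad hpm1 hpm2

end Key

end AuxSLC

theorem slc_envelope_levelSets (W : ℝ × ℝ → ℝ)
    (hlsc : LowerSemicontinuous W)
    (hcoer : Tendsto W (cocompact _) atTop)
    (hsym : ∀ c : ℝ, ∀ p ∈ {p : ℝ × ℝ | W p ≤ c}, (p.2, p.1) ∈ {p : ℝ × ℝ | W p ≤ c})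
    (hdiag : ∀ c : ℝ, ∀ p ∈ {p : ℝ × ℝ | W p ≤ c},
      (p.1, p.1) ∈ {p : ℝ × ℝ | W p ≤ c} ∧ (p.2, p.2) ∈ {p : ℝ × ℝ | W p ≤ c})
    (Wslc : ℝ × ℝ → ℝ)
    (h₁ : SepLevelConvex Wslc) (h₂ : ∀ p, Wslc p ≤ W p)
    (h₃ : ∀ V : ℝ × ℝ → ℝ, SepLevelConvex V → (∀ p, V p ≤ W p) → ∀ p, V p ≤ Wslc p) :
    ∀ c : ℝ, {p | Wslc p ≤ c} = sepConvexHull {p : ℝ × ℝ | W p ≤ c} := by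
  intro c
  obtain ⟨m, hm⟩ := W_bddBelow hlsc hcoer
  have hbdd : ∀ p : ℝ × ℝ, BddBelow {d : ℝ | p ∈ sepConvexHull {q : ℝ × ℝ | W q ≤ d}} := by
    intro p
    refine ⟨m, fun d hd => ?_⟩
    by_contra hmd
    push_neg at hmd
    have hLe : {q : ℝ × ℝ | W q ≤ d} = ∅ := by
      ext q
      simp only [Set.mem_setOf_eq, Set.mem_empty_iff_false, iff_false, not_le]
      linarith [hm q]
    have hsub : sepConvexHull {q : ℝ × ℝ | W q ≤ d} ⊆ (∅ : Set (ℝ × ℝ)) :=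
      sepConvexHull_min (by rw [hLe]) (fun r hr => absurd hr (Set.notMem_empty r))
    exact hsub hd
  have hne : ∀ p : ℝ × ℝ, {d : ℝ | p ∈ sepConvexHull {q : ℝ × ℝ | W q ≤ d}}.Nonempty :=
    fun p => ⟨W p, subset_sepConvexHull (show W p ≤ W p from le_refl _)⟩
  have hup : ∀ (p : ℝ × ℝ) (d d' : ℝ), d ≤ d' →
      p ∈ sepConvexHull {q : ℝ × ℝ | W q ≤ d} →
      p ∈ sepConvexHull {q : ℝ × ℝ | W q ≤ d'} :=
    fun p d d' hdd hp => sepConvexHull_mono (fun q hq => le_trans hq hdd) hp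
  set V : ℝ × ℝ → ℝ := fun p => sInf {d : ℝ | p ∈ sepConvexHull {q : ℝ × ℝ | W q ≤ d}}
    with hV
  have hVle : ∀ (p : ℝ × ℝ) (d : ℝ),
      V p ≤ d ↔ p ∈ sepConvexHull {q : ℝ × ℝ | W q ≤ d} := by
    intro p d
    constructor
    · intro hVp
      refine key hlsc hcoer hsym hdiag d p ?_
      intro n
      have hpos : (0 : ℝ) < 1 / ((n : ℝ) + 1) := by positivity
      have hlt : V p < d + 1 / ((n : ℝ) + 1) := lt_of_le_of_lt hVp (by linarith)
      obtain ⟨e, he, helt⟩ := exists_lt_of_csInf_lt (hne p) hlt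
      exact hup p e _ (le_of_lt helt) he
    · intro h
      exact csInf_le (hbdd p) h
  have hVW : ∀ p, V p ≤ W p :=
    fun p => csInf_le (hbdd p) (subset_sepConvexHull (show W p ≤ W p from le_refl _))
  have hVslc : SepLevelConvex V := by
    intro d
    have hset : {p : ℝ × ℝ | V p ≤ d} = sepConvexHull {q : ℝ × ℝ | W q ≤ d} :=
      Set.ext fun p => hVle p d
    rw [hset]
    exact sepConvex_sepConvexHull
  apply Set.Subset.antisymm
  · intro p hp
    exact (hVle p c).1 (le_trans (h₃ V hVslc hVW p) hp)
  · exact sepConvexHull_min (fun q hq => le_trans (h₂ q) hq) (h₁ c)
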